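/- Let p be an odd prime and let r be a divisor of p−1 with r > 1, and let Γ = G(2p,r). Then: (1) Γ is a Cayley graph of the dihedral group of order 2p (in particular Aut(Γ) contains a dihedral subgroup of order 2p acting regularly on the vertices), and hence Γ is a bicirculant; (2) Γ is a circulant if and only if r is even. -/

import Mathlib

open SimpleGraph

namespace ATB

variable {V : Type*}

/-- `σ` is an automorphism of the graph `Γ`. -/
def IsAut (Γ : SimpleGraph V) (σ : Equiv.Perm V) : Prop :=
  ∀ u v : V, Γ.Adj (σ u) (σ v) ↔ Γ.Adj u v

/-- The full automorphism group of `Γ`, as a subgroup of `Equiv.Perm V`. -/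
def autGroup (Γ : SimpleGraph V) : Subgroup (Equiv.Perm V) where
  carrier := {σ | IsAut Γ σ}
  one_mem' := by intro u v; simp
  mul_mem' := by
    intro a b ha hb u v
    rw [show ((a * b) u) = a (b u) from rfl, show ((a * b) v) = a (b v) from rfl,
      ha (b u) (b v), hb u v]
  inv_mem' := by
    intro a ha u v
    have h := ha (a⁻¹ u) (a⁻¹ v)
    erw [Equiv.apply_symm_apply, Equiv.apply_symm_apply] at h
    exact h.symm

/-- `G` is transitive on the vertices. -/
def VertexTrans (G : Subgroup (Equiv.Perm V)) : Prop := ∀ u v : V, ∃ σ ∈ G, σ u = v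

/-- `G` is transitive on the arcs (ordered pairs of adjacent vertices) of `Γ`. -/
def ArcTrans (Γ : SimpleGraph V) (G : Subgroup (Equiv.Perm V)) : Prop :=
  ∀ u v u' v' : V, Γ.Adj u v → Γ.Adj u' v' → ∃ σ ∈ G, σ u = u' ∧ σ v = v'

/-- `Γ` is arc-transitive (with respect to its full automorphism group). -/
def IsArcTransitive (Γ : SimpleGraph V) : Prop := ArcTrans Γ (autGroup Γ)

/-- A circulant graph: there is an automorphism of order `|V|` acting transitively,
i.e. a cyclic subgroup of the automorphism group acting regularly on the vertices. -/
def IsCirculant (Γ : SimpleGraph V) : Prop :=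
  ∃ σ : Equiv.Perm V, IsAut Γ σ ∧ orderOf σ = Nat.card V ∧
    ∀ v w : V, ∃ k : ℕ, (σ ^ k) v = w

/-- A bicirculant graph on `2n` vertices: an automorphism of order `n` with exactly two
orbits (necessarily both of length `n`). -/
def IsBicirculant (Γ : SimpleGraph V) : Prop :=
  ∃ σ : Equiv.Perm V, IsAut Γ σ ∧ 2 * orderOf σ = Nat.card V ∧
    ∃ v w : V, (∀ u : V, (∃ k : ℕ, (σ ^ k) v = u) ∨ (∃ k : ℕ, (σ ^ k) w = u)) ∧
      ∀ k : ℕ, (σ ^ k) v ≠ w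

/-- The orbit of `v` under a subgroup `H` of permutations. -/
def orb (H : Subgroup (Equiv.Perm V)) (v : V) : Set V := {w | ∃ σ ∈ H, σ v = w}

/-- `H` acts semiregularly: only the identity fixes a point. -/
def Semiregular (H : Subgroup (Equiv.Perm V)) : Prop :=
  ∀ σ ∈ H, σ ≠ 1 → ∀ v : V, σ v ≠ v

/-- `H` acts regularly on the vertices. -/
def RegularOn (H : Subgroup (Equiv.Perm V)) : Prop := VertexTrans H ∧ Semiregular H

/-- `H` has exactly two orbits, namely those of `v` and `w`. -/
def TwoOrbits (H : Subgroup (Equiv.Perm V)) (v w : V) : Prop :=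
  w ∉ orb H v ∧ ∀ u : V, u ∈ orb H v ∨ u ∈ orb H w

/-- `N` is a normal subgroup of `G`. -/
def NormalIn (N G : Subgroup (Equiv.Perm V)) : Prop :=
  N ≤ G ∧ ∀ g ∈ G, ∀ x ∈ N, g * x * g⁻¹ ∈ N

/-- `N` has at most `k` orbits. -/
def AtMostOrbits (N : Subgroup (Equiv.Perm V)) (k : ℕ) : Prop :=
  ∃ f : Fin k → V, ∀ v : V, ∃ i, v ∈ orb N (f i)

/-- `N` has at least three orbits. -/
def AtLeastThreeOrbits (N : Subgroup (Equiv.Perm V)) : Prop :=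
  ∃ a b c : V, b ∉ orb N a ∧ c ∉ orb N a ∧ c ∉ orb N b

/-- `G` is quasiprimitive: transitive, and every nontrivial normal subgroup is transitive. -/
def Quasiprimitive (G : Subgroup (Equiv.Perm V)) : Prop :=
  VertexTrans G ∧ ∀ N : Subgroup (Equiv.Perm V), NormalIn N G → N ≠ ⊥ → VertexTrans N

/-- `G` is bi-quasiprimitive: transitive, every nontrivial normal subgroup has at most
two orbits, and some nontrivial normal subgroup has exactly two orbits. -/
def BiQuasiprimitive (G : Subgroup (Equiv.Perm V)) : Prop :=
  VertexTrans G ∧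
    (∀ N : Subgroup (Equiv.Perm V), NormalIn N G → N ≠ ⊥ → AtMostOrbits N 2) ∧
    ∃ N : Subgroup (Equiv.Perm V), NormalIn N G ∧ N ≠ ⊥ ∧ ∃ v w : V, TwoOrbits N v w

/-- `B` is a block for the action of `G`. -/
def IsBlockFor (G : Subgroup (Equiv.Perm V)) (B : Set V) : Prop :=
  ∀ σ ∈ G, ⇑σ '' B = B ∨ Disjoint (⇑σ '' B) B

/-- `G` is primitive: transitive and every block is trivial. -/
def Primitive (G : Subgroup (Equiv.Perm V)) : Prop :=
  VertexTrans G ∧ ∀ B : Set V, IsBlockFor G B → B.Subsingleton ∨ B = Set.univ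

/-- `G` is 2-transitive on the vertices. -/
def TwoTrans (G : Subgroup (Equiv.Perm V)) : Prop :=
  ∀ u v u' v' : V, u ≠ v → u' ≠ v' → ∃ σ ∈ G, σ u = u' ∧ σ v = v'

/-- `G` is 2-transitive on the subset `Δ`. -/
def TwoTransOn (G : Subgroup (Equiv.Perm V)) (Δ : Set V) : Prop :=
  ∀ u ∈ Δ, ∀ v ∈ Δ, ∀ u' ∈ Δ, ∀ v' ∈ Δ, u ≠ v → u' ≠ v' →
    ∃ σ ∈ G, σ u = u' ∧ σ v = v'

/-- `G` is transitive on the subset `Δ`. -/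
def TransOn (G : Subgroup (Equiv.Perm V)) (Δ : Set V) : Prop :=
  ∀ u ∈ Δ, ∀ v ∈ Δ, ∃ σ ∈ G, σ u = v

/-- `G` acts faithfully on the subset `Δ`. -/
def FaithfulOn (G : Subgroup (Equiv.Perm V)) (Δ : Set V) : Prop :=
  ∀ σ ∈ G, (∀ v ∈ Δ, σ v = v) → σ = 1

/-- `Δ₀, Δ₁` form a bipartition of the graph `Γ`. -/
structure IsBipartition (Γ : SimpleGraph V) (Δ₀ Δ₁ : Set V) : Prop where
  covers : Δ₀ ∪ Δ₁ = Set.univ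
  disj : Disjoint Δ₀ Δ₁
  not_adj₀ : ∀ u ∈ Δ₀, ∀ v ∈ Δ₀, ¬Γ.Adj u v
  not_adj₁ : ∀ u ∈ Δ₁, ∀ v ∈ Δ₁, ¬Γ.Adj u v

/-- The setwise stabilizer of `Δ` in `G`. -/
def setStab (G : Subgroup (Equiv.Perm V)) (Δ : Set V) : Subgroup (Equiv.Perm V) where
  carrier := {σ | σ ∈ G ∧ ⇑σ '' Δ = Δ}
  one_mem' := ⟨G.one_mem, by simp⟩
  mul_mem' := by
    rintro a b ⟨haG, haΔ⟩ ⟨hbG, hbΔ⟩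
    refine ⟨G.mul_mem haG hbG, ?_⟩
    rw [show ⇑(a * b) = ⇑a ∘ ⇑b from rfl, Set.image_comp, hbΔ, haΔ]
  inv_mem' := by
    rintro a ⟨haG, haΔ⟩
    refine ⟨G.inv_mem haG, ?_⟩
    conv_lhs => rw [← haΔ]
    rw [show ⇑a⁻¹ = ⇑a.symm from rfl]
    exact Equiv.symm_image_image a Δ

/-- The subgroup of `G` stabilizing both `Δ₀` and `Δ₁` setwise (`G⁺`). -/
def plusStab (G : Subgroup (Equiv.Perm V)) (Δ₀ Δ₁ : Set V) : Subgroup (Equiv.Perm V) :=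
  setStab (setStab G Δ₀) Δ₁

/-- The stabilizer of the point `v` in `G`. -/
def stabPt (G : Subgroup (Equiv.Perm V)) (v : V) : Subgroup (Equiv.Perm V) :=
  setStab G {v}

/-- A transitive group `G` has rank `k`: every point stabilizer has exactly `k` orbits. -/
def HasRank (G : Subgroup (Equiv.Perm V)) (k : ℕ) : Prop :=
  ∀ v : V, ∃ f : Fin k → V,
    (∀ i j : Fin k, i ≠ j → f j ∉ orb (stabPt G v) (f i)) ∧
    ∀ u : V, ∃ i : Fin k, u ∈ orb (stabPt G v) (f i)

/-- `G` is of affine type over `GF(2)`: it has a regular normal subgroup of exponent 2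
(an elementary abelian 2-group); equivalently `G` embeds in `AGL(m,2)` in its natural action. -/
def AffineTypeTwo (G : Subgroup (Equiv.Perm V)) : Prop :=
  ∃ N : Subgroup (Equiv.Perm V), NormalIn N G ∧ RegularOn N ∧ ∀ σ ∈ N, σ * σ = 1

/-- `P` is a `G`-invariant partition of the vertex set. -/
structure IsInvPartition (G : Subgroup (Equiv.Perm V)) (P : Set (Set V)) : Prop where
  nonempty : ∀ B ∈ P, B.Nonempty
  covers : ∀ v : V, ∃ B ∈ P, v ∈ B
  disj : ∀ B ∈ P, ∀ C ∈ P, B ≠ C → Disjoint B C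
  inv : ∀ σ ∈ G, ∀ B ∈ P, ⇑σ '' B ∈ P

/-- `Q` is a block for the induced action of `G` on the partition `P`. -/
def PartBlock (G : Subgroup (Equiv.Perm V)) (P Q : Set (Set V)) : Prop :=
  Q ⊆ P ∧ ∀ σ ∈ G,
    (fun B => ⇑σ '' B) '' Q = Q ∨ Disjoint ((fun B => ⇑σ '' B) '' Q) Q

/-- `G` is transitive on the parts of `P`. -/
def TransOnParts (G : Subgroup (Equiv.Perm V)) (P : Set (Set V)) : Prop :=
  ∀ B ∈ P, ∀ C ∈ P, ∃ σ ∈ G, ⇑σ '' B = C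

/-- The induced action of `G` on the partition `P` is primitive. -/
def PrimitiveOnParts (G : Subgroup (Equiv.Perm V)) (P : Set (Set V)) : Prop :=
  TransOnParts G P ∧ ∀ Q : Set (Set V), PartBlock G P Q → Q.Subsingleton ∨ Q = P

/-- `G` acts faithfully on the partition `P`. -/
def FaithfulOnParts (G : Subgroup (Equiv.Perm V)) (P : Set (Set V)) : Prop :=
  ∀ σ ∈ G, (∀ B ∈ P, ⇑σ '' B = B) → σ = 1

/-- The induced action of `G` on the partition `P` is 2-transitive. -/
def TwoTransOnParts (G : Subgroup (Equiv.Perm V)) (P : Set (Set V)) : Prop :=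
  ∀ B ∈ P, ∀ C ∈ P, ∀ B' ∈ P, ∀ C' ∈ P, B ≠ C → B' ≠ C' →
    ∃ σ ∈ G, ⇑σ '' B = B' ∧ ⇑σ '' C = C'

/-- `H` has exactly two orbits of equal size on the subset `Δ`. -/
def TwoEqualOrbitsOn (H : Subgroup (Equiv.Perm V)) (Δ : Set V) : Prop :=
  ∃ a ∈ Δ, ∃ b ∈ Δ, orb H a ∪ orb H b = Δ ∧ Disjoint (orb H a) (orb H b) ∧
    (orb H a).ncard = (orb H b).ncard

/-- `G` is almost simple: it has a nonabelian simple normal subgroup with trivial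
centralizer, i.e. `S ≤ G ≤ Aut(S)` for a nonabelian simple group `S`. -/
def AlmostSimple (G : Subgroup (Equiv.Perm V)) : Prop :=
  ∃ S : Subgroup (Equiv.Perm V), S ≤ G ∧ (∀ g ∈ G, ∀ s ∈ S, g * s * g⁻¹ ∈ S) ∧
    IsSimpleGroup ↥S ∧ (∃ a ∈ S, ∃ b ∈ S, a * b ≠ b * a) ∧
    ∀ g ∈ G, (∀ s ∈ S, g * s = s * g) → g = 1

/-- The setoid on `V` whose classes are the orbits of `N`. -/
def orbSetoid (N : Subgroup (Equiv.Perm V)) : Setoid V where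
  r u v := ∃ σ ∈ N, σ u = v
  iseqv := by
    refine ⟨fun u => ⟨1, N.one_mem, rfl⟩, ?_, ?_⟩
    · rintro u v ⟨σ, hσ, rfl⟩
      exact ⟨σ⁻¹, N.inv_mem hσ, Equiv.symm_apply_apply σ u⟩
    · rintro u v w ⟨σ, hσ, rfl⟩ ⟨τ, hτ, rfl⟩
      exact ⟨τ * σ, N.mul_mem hτ hσ, rfl⟩

/-- The set of orbits of `N` on `V`. -/
abbrev orbQuot (N : Subgroup (Equiv.Perm V)) : Type _ := Quotient (orbSetoid N)

/-- The orbit of `v`, as a vertex of the quotient. -/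
def cls (N : Subgroup (Equiv.Perm V)) (v : V) : orbQuot N := Quotient.mk (orbSetoid N) v

/-- The quotient graph of `Γ` by a partition given as a setoid: parts are adjacent
iff some vertex of one is adjacent to some vertex of the other. -/
def setoidQuot (Γ : SimpleGraph V) (s : Setoid V) : SimpleGraph (Quotient s) where
  Adj A B := A ≠ B ∧ ∃ u v : V, Γ.Adj u v ∧ Quotient.mk s u = A ∧ Quotient.mk s v = B
  symm := by
    constructor
    rintro A B ⟨hne, u, v, h, hu, hv⟩
    exact ⟨hne.symm, v, u, h.symm, hv, hu⟩
  loopless := by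
    constructor
    rintro A ⟨hne, -⟩
    exact hne rfl

/-- The quotient graph `Γ_N` of `Γ` by the orbits of `N`. -/
def quotGraph (Γ : SimpleGraph V) (N : Subgroup (Equiv.Perm V)) : SimpleGraph (orbQuot N) :=
  setoidQuot Γ (orbSetoid N)

/-- `Γ` is an `r`-cover of the quotient graph `Γ_N`: for every edge `{B,C}` of `Γ_N`
and every `v ∈ B`, `v` has exactly `r` neighbours in `C`. -/
def IsRCover (Γ : SimpleGraph V) (N : Subgroup (Equiv.Perm V)) (r : ℕ) : Prop :=
  ∀ (v : V) (C : orbQuot N), (quotGraph Γ N).Adj (cls N v) C →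
    {u : V | Γ.Adj v u ∧ cls N u = C}.ncard = r

/-! ## The particular graphs -/

/-- The complete multipartite graph with `m` parts of size `b`. -/
def completeMultipartite (m b : ℕ) : SimpleGraph (Fin m × Fin b) :=
  SimpleGraph.fromRel fun u v => u.1 ≠ v.1

/-- `K_{n,n}` minus a perfect matching. -/
def knnMinus (n : ℕ) : SimpleGraph (Fin n ⊕ Fin n) :=
  SimpleGraph.fromRel fun u v => ∃ i j : Fin n, i ≠ j ∧ u = Sum.inl i ∧ v = Sum.inr j

/-- The graph `G(2p,r)`: bipartite on two copies of `Z_p`, with `x ~ y'` iff `y - x`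
lies in the unique subgroup of order `r` of the multiplicative group (the solutions
of `z^r = 1`). -/
def graphG (p r : ℕ) : SimpleGraph (ZMod p ⊕ ZMod p) :=
  SimpleGraph.fromRel fun u v =>
    ∃ x y : ZMod p, u = Sum.inl x ∧ v = Sum.inr y ∧ (y - x) ^ r = 1

/-- The circulant `Cay(p,e) = Cay(Z_p, S)` where `S` is the unique subgroup of order `e`
of the multiplicative group of `Z_p` (the solutions of `z^e = 1`). -/
def cayCirc (p e : ℕ) : SimpleGraph (ZMod p) :=
  SimpleGraph.fromRel fun x y => (y - x) ^ e = 1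

/-- The points (1-dimensional subspaces) of the projective space `PG(d-1,F)`. -/
def projPoint (F : Type*) [Field F] (d : ℕ) : Type _ :=
  {W : Submodule F (Fin d → F) // Module.finrank F W = 1}

/-- The hyperplanes (`(d-1)`-dimensional subspaces) of the projective space `PG(d-1,F)`. -/
def projHyp (F : Type*) [Field F] (d : ℕ) : Type _ :=
  {W : Submodule F (Fin d → F) // Module.finrank F W = d - 1}

/-- The point-hyperplane incidence graph `B(PG(d-1,q))`. -/
def BPG (F : Type*) [Field F] (d : ℕ) : SimpleGraph (projPoint F d ⊕ projHyp F d) :=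
  SimpleGraph.fromRel fun u v => ∃ (A : projPoint F d) (B : projHyp F d),
    u = Sum.inl A ∧ v = Sum.inr B ∧ A.1 ≤ B.1

/-- The point-hyperplane non-incidence graph `B'(PG(d-1,q))`. -/
def BPG' (F : Type*) [Field F] (d : ℕ) : SimpleGraph (projPoint F d ⊕ projHyp F d) :=
  SimpleGraph.fromRel fun u v => ∃ (A : projPoint F d) (B : projHyp F d),
    u = Sum.inl A ∧ v = Sum.inr B ∧ A.1 ⊓ B.1 = ⊥

/-- The nonzero quadratic residues modulo 11. -/
def quadRes11 : Set (ZMod 11) := {1, 3, 4, 5, 9}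

/-- The graph `B'(H(11))`: vertices are `Z_11` (left part) together with the translates
`R + i` of the residues `R` (right part, indexed by `i`), with `x` adjacent to `R + i`
iff `x ∉ R + i`. -/
def BH11' : SimpleGraph (ZMod 11 ⊕ ZMod 11) :=
  SimpleGraph.fromRel fun u v =>
    ∃ x i : ZMod 11, u = Sum.inl x ∧ v = Sum.inr i ∧ x - i ∉ quadRes11

/-- The Hamming graph `H(2,4)`. -/
def hamming24 : SimpleGraph (Fin 4 × Fin 4) :=
  SimpleGraph.fromRel fun u v => (u.1 = v.1 ∧ u.2 ≠ v.2) ∨ (u.1 ≠ v.1 ∧ u.2 = v.2)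

/-- The Petersen graph: the Kneser graph on 2-subsets of a 5-set. -/
def petersen : SimpleGraph {s : Finset (Fin 5) // s.card = 2} :=
  SimpleGraph.fromRel fun u v => Disjoint u.1 v.1

/-- The 5-dimensional hypercube graph. -/
def cube5 : SimpleGraph (Fin 5 → ZMod 2) :=
  SimpleGraph.fromRel fun x y => ∃! i : Fin 5, x i ≠ y i

/-- The antipodal pairing on the 5-cube. -/
def antipodal5 : Setoid (Fin 5 → ZMod 2) where
  r x y := y = x ∨ y = x + 1
  iseqv := by
    have key : ∀ x : Fin 5 → ZMod 2, x + 1 + 1 = x := by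
      intro x
      funext i
      show x i + 1 + 1 = x i
      have h : (1 + 1 : ZMod 2) = 0 := by decide
      rw [add_assoc, h, add_zero]
    refine ⟨fun x => Or.inl rfl, ?_, ?_⟩
    · rintro x y (rfl | rfl)
      · exact Or.inl rfl
      · exact Or.inr (key x).symm
    · rintro x y z (rfl | rfl) h2
      · exact h2
      · rcases h2 with rfl | rfl
        · exact Or.inr rfl
        · exact Or.inl (key x)

/-- The folded 5-cube: the quotient of the 5-cube by the antipodal pairing. -/
def foldedCube5 : SimpleGraph (Quotient antipodal5) := setoidQuot cube5 antipodal5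

/-- The Clebsch graph: the complement of the folded 5-cube. -/
def clebsch : SimpleGraph (Quotient antipodal5) := foldedCube5ᶜ

/-- The standard double cover of `Γ`. -/
def doubleCover (Γ : SimpleGraph V) : SimpleGraph (V × Bool) :=
  SimpleGraph.fromRel fun u v => Γ.Adj u.1 v.1 ∧ u.2 = true ∧ v.2 = false

/-- The swap `(x,i) ↦ (x, 3-i)` of the two levels of the standard double cover. -/
def swapPerm (V : Type*) : Equiv.Perm (V × Bool) :=
  Equiv.prodCongr (Equiv.refl V) ⟨Bool.not, Bool.not, Bool.not_not, Bool.not_not⟩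

/-- The Cayley graph of a group with connection set `S` (edges `{g, s*g}`). -/
def cayleyGraph {T : Type*} [Group T] (S : Set T) : SimpleGraph T :=
  SimpleGraph.fromRel fun g h => ∃ s ∈ S, h = s * g

/-! ## `PGL` and `PΓL` acting on projective points -/

/-- `g` is a `τ`-semilinear bijection. -/
def IsSemilinearBij (F : Type*) [Field F] (d : ℕ) (τ : F ≃+* F)
    (g : (Fin d → F) ≃ (Fin d → F)) : Prop :=
  (∀ x y : Fin d → F, g (x + y) = g x + g y) ∧
  ∀ (c : F) (x : Fin d → F), g (c • x) = τ c • g x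

/-- `g` is a linear bijection. -/
def IsLinearBij (F : Type*) [Field F] (d : ℕ) (g : (Fin d → F) ≃ (Fin d → F)) : Prop :=
  (∀ x y : Fin d → F, g (x + y) = g x + g y) ∧
  ∀ (c : F) (x : Fin d → F), g (c • x) = c • g x

/-- The permutation `π` of the projective points is induced by the bijection `g`. -/
def inducesProjMap (F : Type*) [Field F] (d : ℕ) (g : (Fin d → F) ≃ (Fin d → F))
    (π : Equiv.Perm (projPoint F d)) : Prop :=
  ∀ W : projPoint F d, ((π W).1 : Set (Fin d → F)) = ⇑g '' ((W.1 : Submodule F (Fin d → F)) : Set (Fin d → F))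

/-- `PΓL(d,F)` as a permutation group on the projective points: the permutations induced
by semilinear bijections. -/
def PGammaL (F : Type*) [Field F] (d : ℕ) : Subgroup (Equiv.Perm (projPoint F d)) where
  carrier := {π | ∃ (τ : F ≃+* F) (g : (Fin d → F) ≃ (Fin d → F)),
    IsSemilinearBij F d τ g ∧ inducesProjMap F d g π}
  one_mem' := ⟨RingEquiv.refl F, Equiv.refl _, ⟨fun _ _ => rfl, fun _ _ => rfl⟩,
    fun W => by simp [inducesProjMap]⟩
  mul_mem' := by
    rintro a b ⟨τa, ga, ⟨haAdd, haSmul⟩, hIa⟩ ⟨τb, gb, ⟨hbAdd, hbSmul⟩, hIb⟩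
    refine ⟨τb.trans τa, gb.trans ga, ⟨?_, ?_⟩, ?_⟩
    · intro x y
      simp only [Equiv.trans_apply, hbAdd, haAdd]
    · intro c x
      simp only [Equiv.trans_apply, hbSmul, haSmul, RingEquiv.trans_apply]
    · intro W
      have h2 := hIa (b W)
      have h := hIb W
      rw [show ((a * b) W) = a (b W) from rfl, h2, h,
        show ⇑(gb.trans ga) = ⇑ga ∘ ⇑gb from rfl, Set.image_comp]
  inv_mem' := by
    rintro a ⟨τ, g, ⟨hAdd, hSmul⟩, hI⟩
    refine ⟨τ.symm, g.symm, ⟨?_, ?_⟩, ?_⟩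
    · intro x y
      apply g.injective
      rw [hAdd, Equiv.apply_symm_apply, Equiv.apply_symm_apply, Equiv.apply_symm_apply]
    · intro c x
      apply g.injective
      rw [hSmul, Equiv.apply_symm_apply, Equiv.apply_symm_apply,
        RingEquiv.apply_symm_apply]
    · intro W
      have h := hI (a⁻¹ W)
      erw [Equiv.apply_symm_apply] at h
      rw [h, Equiv.symm_image_image]

/-- `PGL(d,F)` as a permutation group on the projective points: the permutations induced
by linear bijections. -/
def PGLsub (F : Type*) [Field F] (d : ℕ) : Subgroup (Equiv.Perm (projPoint F d)) where
  carrier := {π | ∃ g : (Fin d → F) ≃ (Fin d → F), IsLinearBij F d g ∧ inducesProjMap F d g π}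
  one_mem' := ⟨Equiv.refl _, ⟨fun _ _ => rfl, fun _ _ => rfl⟩, fun W => by simp [inducesProjMap]⟩
  mul_mem' := by
    rintro a b ⟨ga, ⟨haAdd, haSmul⟩, hIa⟩ ⟨gb, ⟨hbAdd, hbSmul⟩, hIb⟩
    refine ⟨gb.trans ga, ⟨?_, ?_⟩, ?_⟩
    · intro x y
      simp only [Equiv.trans_apply, hbAdd, haAdd]
    · intro c x
      simp only [Equiv.trans_apply, hbSmul, haSmul]
    · intro W
      have h2 := hIa (b W)
      have h := hIb W
      rw [show ((a * b) W) = a (b W) from rfl, h2, h,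
        show ⇑(gb.trans ga) = ⇑ga ∘ ⇑gb from rfl, Set.image_comp]
  inv_mem' := by
    rintro a ⟨g, ⟨hAdd, hSmul⟩, hI⟩
    refine ⟨g.symm, ⟨?_, ?_⟩, ?_⟩
    · intro x y
      apply g.injective
      rw [hAdd, Equiv.apply_symm_apply, Equiv.apply_symm_apply, Equiv.apply_symm_apply]
    · intro c x
      apply g.injective
      rw [hSmul, Equiv.apply_symm_apply, Equiv.apply_symm_apply]
    · intro W
      have h := hI (a⁻¹ W)
      erw [Equiv.apply_symm_apply] at h
      rw [h, Equiv.symm_image_image]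

/-- The graphs appearing in the main theorem (Theorem 1.1 (a)-(g)). -/
def IsBasicGraph {W : Type*} (Δ : SimpleGraph W) : Prop :=
  (∃ n : ℕ, 2 ≤ n ∧ Nonempty (Δ ≃g completeBipartiteGraph (Fin n) (Fin n))) ∨
  (∃ n : ℕ, 3 ≤ n ∧ Nonempty (Δ ≃g (⊤ : SimpleGraph (Fin n)))) ∨
  (∃ n : ℕ, 3 ≤ n ∧ Nonempty (Δ ≃g completeMultipartite n 2)) ∨
  (∃ n : ℕ, 3 ≤ n ∧ Nonempty (Δ ≃g knnMinus n)) ∨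
  (∃ p e : ℕ, p.Prime ∧ 1 < e ∧ e ∣ p - 1 ∧ Nonempty (Δ ≃g graphG p e)) ∨
  (∃ (F : Type) (iF : Field F) (_ : Finite F) (d : ℕ), 3 ≤ d ∧
    (Nonempty (Δ ≃g @BPG F iF d) ∨ Nonempty (Δ ≃g @BPG' F iF d))) ∨
  (∃ p e : ℕ, p.Prime ∧ 2 ∣ e ∧ e ∣ p - 1 ∧ Nonempty (Δ ≃g cayCirc p e)) ∨
  Nonempty (Δ ≃g BH11') ∨
  (Nonempty (Δ ≃g petersen) ∨ Nonempty (Δ ≃g petersenᶜ)) ∨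
  (Nonempty (Δ ≃g hamming24) ∨ Nonempty (Δ ≃g hamming24ᶜ)) ∨
  (Nonempty (Δ ≃g clebsch) ∨ Nonempty (Δ ≃g clebschᶜ))

/-! ### Auxiliary material for Lemma 2.3 -/

section Aux

variable {p r : ℕ}

lemma adj_inl_inr (x y : ZMod p) :
    (graphG p r).Adj (Sum.inl x) (Sum.inr y) ↔ (y - x) ^ r = 1 := by
  constructor
  · rintro ⟨hne, ⟨a, b, ha, hb, hab⟩ | ⟨a, b, ha, hb, hab⟩⟩
    · cases ha; cases hb; exact hab
    · exact absurd ha (by simp)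
  · intro h
    exact ⟨by simp, Or.inl ⟨x, y, rfl, rfl, h⟩⟩

lemma adj_inr_inl (x y : ZMod p) :
    (graphG p r).Adj (Sum.inr y) (Sum.inl x) ↔ (y - x) ^ r = 1 := by
  rw [SimpleGraph.adj_comm]; exact adj_inl_inr x y

lemma not_adj_inl_inl (x y : ZMod p) : ¬ (graphG p r).Adj (Sum.inl x) (Sum.inl y) := by
  rintro ⟨hne, ⟨a, b, ha, hb, hab⟩ | ⟨a, b, ha, hb, hab⟩⟩ <;> simp_all

lemma not_adj_inr_inr (x y : ZMod p) : ¬ (graphG p r).Adj (Sum.inr x) (Sum.inr y) := by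
  rintro ⟨hne, ⟨a, b, ha, hb, hab⟩ | ⟨a, b, ha, hb, hab⟩⟩ <;> simp_all

/-- A same-side pair of bijections is an automorphism as soon as it preserves
the difference condition. -/
lemma isAut_same (f g : ZMod p ≃ ZMod p)
    (h : ∀ x y : ZMod p, (g y - f x) ^ r = 1 ↔ (y - x) ^ r = 1) :
    IsAut (graphG p r) (Equiv.sumCongr f g) := by
  rintro (x | x) (y | y) <;>
    simp only [Equiv.sumCongr_apply, Sum.map_inl, Sum.map_inr]
  · exact iff_of_false (not_adj_inl_inl _ _) (not_adj_inl_inl _ _)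
  · rw [adj_inl_inr, adj_inl_inr, h]
  · rw [adj_inr_inl, adj_inr_inl, h]
  · exact iff_of_false (not_adj_inr_inr _ _) (not_adj_inr_inr _ _)

/-- A side-swapping pair of bijections is an automorphism as soon as it preserves
the (reversed) difference condition. -/
lemma isAut_swap (f g : ZMod p ≃ ZMod p)
    (h : ∀ x y : ZMod p, (f x - g y) ^ r = 1 ↔ (y - x) ^ r = 1) :
    IsAut (graphG p r) ((Equiv.sumCongr f g).trans (Equiv.sumComm (ZMod p) (ZMod p))) := by
  rintro (x | x) (y | y) <;>
    simp only [Equiv.trans_apply, Equiv.sumCongr_apply, Sum.map_inl, Sum.map_inr,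
      Equiv.sumComm_apply, Sum.swap_inl, Sum.swap_inr]
  · exact iff_of_false (not_adj_inr_inr _ _) (not_adj_inl_inl _ _)
  · rw [adj_inr_inl, adj_inl_inr, h]
  · rw [adj_inl_inr, adj_inr_inl, h]
  · exact iff_of_false (not_adj_inl_inl _ _) (not_adj_inr_inr _ _)

end Aux

section Dihedral

variable {p r : ℕ}

/-- The dihedral group of order `2p` as permutations of the two copies of `ZMod p`. -/
def dihPerm (p : ℕ) : DihedralGroup p → Equiv.Perm (ZMod p ⊕ ZMod p)
  | .r i => Equiv.sumCongr (Equiv.subRight i) (Equiv.subRight i)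
  | .sr i => (Equiv.sumCongr (Equiv.subLeft i) (Equiv.subLeft i)).trans
      (Equiv.sumComm (ZMod p) (ZMod p))

@[simp] lemma dihPerm_r_inl (i x : ZMod p) :
    dihPerm p (.r i) (Sum.inl x) = Sum.inl (x - i) := rfl
@[simp] lemma dihPerm_r_inr (i x : ZMod p) :
    dihPerm p (.r i) (Sum.inr x) = Sum.inr (x - i) := rfl
@[simp] lemma dihPerm_sr_inl (i x : ZMod p) :
    dihPerm p (.sr i) (Sum.inl x) = Sum.inr (i - x) := rfl
@[simp] lemma dihPerm_sr_inr (i x : ZMod p) :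
    dihPerm p (.sr i) (Sum.inr x) = Sum.inl (i - x) := rfl

/-- `dihPerm` as a monoid homomorphism. -/
def dihHom (p : ℕ) : DihedralGroup p →* Equiv.Perm (ZMod p ⊕ ZMod p) :=
  MonoidHom.mk' (dihPerm p) (by
    rintro (i | i) (j | j) <;> ext (x | x) <;>
      simp only [DihedralGroup.r_mul_r, DihedralGroup.r_mul_sr, DihedralGroup.sr_mul_r,
        DihedralGroup.sr_mul_sr, Equiv.Perm.mul_apply, dihPerm_r_inl, dihPerm_r_inr,
        dihPerm_sr_inl, dihPerm_sr_inr, Sum.inl.injEq, Sum.inr.injEq] <;> ring)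

lemma dihHom_injective (hp : 1 < p) : Function.Injective (dihHom p) := by
  have : NeZero p := ⟨by omega⟩
  rw [injective_iff_map_eq_one]
  rintro (i | i) h
  · have h0 := congrArg (fun σ : Equiv.Perm (ZMod p ⊕ ZMod p) => σ (Sum.inl 0)) h
    simp only [dihHom, MonoidHom.mk'_apply, dihPerm_r_inl, Equiv.Perm.one_apply,
      zero_sub, Sum.inl.injEq] at h0
    rw [show (DihedralGroup.r i : DihedralGroup p) = .r i from rfl, neg_eq_zero.mp h0]
    rfl
  · have h0 := congrArg (fun σ : Equiv.Perm (ZMod p ⊕ ZMod p) => σ (Sum.inl 0)) h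
    simp only [dihHom, MonoidHom.mk'_apply, dihPerm_sr_inl, Equiv.Perm.one_apply] at h0
    exact absurd h0 (by simp)

lemma dihHom_mem_aut (hr0 : r ≠ 0) (a : DihedralGroup p) :
    dihHom p a ∈ autGroup (graphG p r) := by
  cases a with
  | r i =>
    exact isAut_same (Equiv.subRight i) (Equiv.subRight i)
      (fun x y => by simp only [Equiv.subRight_apply]; rw [show (y - i) - (x - i) = y - x by ring])
  | sr i =>
    exact isAut_swap (Equiv.subLeft i) (Equiv.subLeft i)
      (fun x y => by simp only [Equiv.subLeft_apply]; rw [show (i - x) - (i - y) = y - x by ring])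

end Dihedral

section Part1

variable {p r : ℕ}

lemma dih_regular (hp : 1 < p) : RegularOn ((dihHom p).range) := by
  constructor
  · rintro (x | x) (y | y)
    · refine ⟨dihHom p (.r (x - y)), ⟨_, rfl⟩, ?_⟩
      simp only [dihHom, MonoidHom.mk'_apply, dihPerm_r_inl, Sum.inl.injEq]; ring
    · refine ⟨dihHom p (.sr (x + y)), ⟨_, rfl⟩, ?_⟩
      simp only [dihHom, MonoidHom.mk'_apply, dihPerm_sr_inl, Sum.inr.injEq]; ring
    · refine ⟨dihHom p (.sr (x + y)), ⟨_, rfl⟩, ?_⟩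
      simp only [dihHom, MonoidHom.mk'_apply, dihPerm_sr_inr, Sum.inl.injEq]; ring
    · refine ⟨dihHom p (.r (x - y)), ⟨_, rfl⟩, ?_⟩
      simp only [dihHom, MonoidHom.mk'_apply, dihPerm_r_inr, Sum.inr.injEq]; ring
  · rintro σ ⟨a, rfl⟩ hne v
    cases a with
    | r i =>
      have hi : i ≠ 0 := by
        rintro rfl
        apply hne
        ext (x | x) <;> simp only [dihHom, MonoidHom.mk'_apply, dihPerm_r_inl, dihPerm_r_inr, Equiv.Perm.one_apply, sub_zero]
      rcases v with x | x <;>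
        simp only [dihHom, MonoidHom.mk'_apply, dihPerm_r_inl, dihPerm_r_inr,
          ne_eq, Sum.inl.injEq, Sum.inr.injEq] <;>
        · intro h
          apply hi
          have h2 : x - i - x = 0 := by rw [h]; ring
          rwa [show x - i - x = -i by ring, neg_eq_zero] at h2
    | sr i =>
      rcases v with x | x <;> simp [dihHom]

end Part1

section Rot

variable {p r : ℕ}

/-- The rotation `x ↦ x + 1` on both sides. -/
def rotP (p : ℕ) : Equiv.Perm (ZMod p ⊕ ZMod p) :=
  Equiv.sumCongr (Equiv.addRight 1) (Equiv.addRight 1)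

@[simp] lemma rotP_inl (x : ZMod p) : rotP p (Sum.inl x) = Sum.inl (x + 1) := rfl
@[simp] lemma rotP_inr (x : ZMod p) : rotP p (Sum.inr x) = Sum.inr (x + 1) := rfl

lemma rotP_aut : IsAut (graphG p r) (rotP p) :=
  isAut_same _ _ (fun x y => by
    simp only [Equiv.coe_addRight]
    rw [show (y + 1) - (x + 1) = y - x by ring])

lemma rotP_pow (n : ℕ) :
    ∀ x : ZMod p, ((rotP p) ^ n) (Sum.inl x) = Sum.inl (x + n) ∧
      ((rotP p) ^ n) (Sum.inr x) = Sum.inr (x + n) := by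
  induction n with
  | zero => intro x; simp
  | succ n ih =>
    intro x
    have h1 : ((rotP p) ^ (n + 1)) = ((rotP p) ^ n) * rotP p := pow_succ _ _
    rw [h1]
    simp only [Equiv.Perm.mul_apply, rotP_inl, rotP_inr]
    rcases ih (x + 1) with ⟨h2, h3⟩
    rw [h2, h3]
    push_cast
    constructor <;> · congr 1; ring

lemma rotP_orderOf (hp : p.Prime) : orderOf (rotP p) = p := by
  haveI : Fact p.Prime := ⟨hp⟩
  refine orderOf_eq_prime ?_ ?_
  · ext (x | x) <;>
      simp [(rotP_pow p x).1, (rotP_pow p x).2]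
  · intro h
    have h0 := congrArg (fun σ : Equiv.Perm (ZMod p ⊕ ZMod p) => σ (Sum.inl 0)) h
    simp only [rotP_inl, Equiv.Perm.one_apply, zero_add, Sum.inl.injEq] at h0
    exact one_ne_zero h0

lemma card_vtx (hp : p.Prime) : Nat.card (ZMod p ⊕ ZMod p) = 2 * p := by
  haveI : NeZero p := ⟨hp.ne_zero⟩
  rw [Nat.card_sum, Nat.card_zmod, two_mul]

end Rot

section Bicirc

variable {p r : ℕ}

lemma bicirc (hp : p.Prime) : IsBicirculant (graphG p r) := by
  haveI : NeZero p := ⟨hp.ne_zero⟩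
  refine ⟨rotP p, rotP_aut, ?_, Sum.inl 0, Sum.inr 0, ?_, ?_⟩
  · rw [rotP_orderOf hp, card_vtx hp]
  · rintro (x | x)
    · exact Or.inl ⟨x.val, by rw [(rotP_pow x.val 0).1, zero_add, ZMod.natCast_rightInverse x]⟩
    · exact Or.inr ⟨x.val, by rw [(rotP_pow x.val 0).2, zero_add, ZMod.natCast_rightInverse x]⟩
  · intro k h
    rw [(rotP_pow k 0).1] at h
    exact absurd h (by simp)

/-- The order-`2p` rotation used when `r` is even. -/
def rotC (p : ℕ) : Equiv.Perm (ZMod p ⊕ ZMod p) :=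
  (Equiv.sumCongr (Equiv.addRight 1) (Equiv.addRight 1)).trans
    (Equiv.sumComm (ZMod p) (ZMod p))

@[simp] lemma rotC_inl (x : ZMod p) : rotC p (Sum.inl x) = Sum.inr (x + 1) := rfl
@[simp] lemma rotC_inr (x : ZMod p) : rotC p (Sum.inr x) = Sum.inl (x + 1) := rfl

lemma rotC_aut (hre : Even r) : IsAut (graphG p r) (rotC p) :=
  isAut_swap _ _ (fun x y => by
    simp only [Equiv.coe_addRight]
    rw [show (x + 1) - (y + 1) = -(y - x) by ring, hre.neg_pow])

lemma rotC_pow (n : ℕ) :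
    ∀ x : ZMod p,
      ((rotC p) ^ n) (Sum.inl x) =
        (if Even n then Sum.inl (x + n) else Sum.inr (x + n)) ∧
      ((rotC p) ^ n) (Sum.inr x) =
        (if Even n then Sum.inr (x + n) else Sum.inl (x + n)) := by
  induction n with
  | zero => intro x; simp
  | succ n ih =>
    intro x
    have h1 : ((rotC p) ^ (n + 1)) = ((rotC p) ^ n) * rotC p := pow_succ _ _
    rw [h1]
    simp only [Equiv.Perm.mul_apply, rotC_inl, rotC_inr]
    rcases ih (x + 1) with ⟨h2, h3⟩
    rw [h2, h3]
    have hx : x + 1 + (n : ZMod p) = x + ((n : ℕ) + 1 : ℕ) := by push_cast; ring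
    rcases Nat.even_or_odd n with he | ho
    · have hno : ¬ Even (n + 1) := by simp [Nat.even_add_one, he]
      simp only [if_pos he, if_neg hno, hx]
      exact ⟨trivial, trivial⟩
    · have hne : ¬ Even n := by simp [Nat.not_even_iff_odd.mpr ho]
      have hyes : Even (n + 1) := by simpa [Nat.even_add_one] using hne
      simp only [if_neg hne, if_pos hyes, hx]
      exact ⟨trivial, trivial⟩

end Bicirc

section CircEasy

variable {p r : ℕ}

lemma rotC_orderOf (hp : p.Prime) (hodd : Odd p) : orderOf (rotC p) = 2 * p := by
  haveI : NeZero p := ⟨hp.ne_zero⟩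
  have hdvd : ∀ n : ℕ, (rotC p) ^ n = 1 → 2 * p ∣ n := by
    intro n hn
    have h0 := congrArg (fun σ : Equiv.Perm (ZMod p ⊕ ZMod p) => σ (Sum.inl 0)) hn
    simp only [(rotC_pow n 0).1, Equiv.Perm.one_apply, zero_add] at h0
    rcases Nat.even_or_odd n with he | ho
    · rw [if_pos he] at h0
      have hcast : (n : ZMod p) = 0 := by simpa using h0
      have hpn : p ∣ n := (ZMod.natCast_eq_zero_iff n p).mp hcast
      have hcop : Nat.Coprime 2 p := by
        rw [Nat.coprime_two_left]; exact hodd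
      exact Nat.Coprime.mul_dvd_of_dvd_of_dvd hcop he.two_dvd hpn
    · rw [if_neg (Nat.not_even_iff_odd.mpr ho)] at h0
      exact absurd h0 (by simp)
  have h2p : (rotC p) ^ (2 * p) = 1 := by
    ext (x | x) <;>
      simp [(rotC_pow (2 * p) x).1, (rotC_pow (2 * p) x).2, Nat.even_iff, Nat.mul_mod_right]
  exact Nat.dvd_antisymm (orderOf_dvd_of_pow_eq_one h2p) (hdvd _ (pow_orderOf_eq_one _))

lemma rotC_trans (hp : p.Prime) (hodd : Odd p) :
    ∀ v w : ZMod p ⊕ ZMod p, ∃ k : ℕ, ((rotC p) ^ k) v = w := by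
  haveI : NeZero p := ⟨hp.ne_zero⟩
  have hp1even : Even (p + 1) := by
    rcases hodd with ⟨m, rfl⟩; exact ⟨m + 1, by ring⟩
  have hcast : ∀ m : ℕ, ((m * (p + 1) : ℕ) : ZMod p) = (m : ZMod p) := by
    intro m; push_cast [ZMod.natCast_self]; ring
  rintro (x | x) (y | y)
  · refine ⟨(y - x).val * (p + 1), ?_⟩
    rw [(rotC_pow _ x).1, if_pos (hp1even.mul_left _), hcast, ZMod.natCast_rightInverse]
    rw [Sum.inl.injEq]; ring
  · refine ⟨(y - x).val * (p + 1) + p, ?_⟩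
    have : ¬ Even ((y - x).val * (p + 1) + p) := by
      rcases hp1even.mul_left (y - x).val with ⟨a, ha⟩
      rcases hodd with ⟨b, hb⟩
      intro hcon; rcases hcon with ⟨c, hc⟩; omega
    rw [(rotC_pow _ x).1, if_neg this]
    push_cast [ZMod.natCast_self, hcast]
    rw [Sum.inr.injEq, ZMod.natCast_rightInverse]; ring
  · refine ⟨(y - x).val * (p + 1) + p, ?_⟩
    have : ¬ Even ((y - x).val * (p + 1) + p) := by
      rcases hp1even.mul_left (y - x).val with ⟨a, ha⟩
      rcases hodd with ⟨b, hb⟩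
      intro hcon; rcases hcon with ⟨c, hc⟩; omega
    rw [(rotC_pow _ x).2, if_neg this]
    push_cast [ZMod.natCast_self, hcast]
    rw [Sum.inl.injEq, ZMod.natCast_rightInverse]; ring
  · refine ⟨(y - x).val * (p + 1), ?_⟩
    rw [(rotC_pow _ x).2, if_pos (hp1even.mul_left _), hcast, ZMod.natCast_rightInverse]
    rw [Sum.inr.injEq]; ring

lemma circ_of_even (hp : p.Prime) (hodd : Odd p) (hre : Even r) :
    IsCirculant (graphG p r) := by
  exact ⟨rotC p, rotC_aut hre, by rw [rotC_orderOf hp hodd, card_vtx hp], rotC_trans hp hodd⟩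

end CircEasy

section Lfacts

variable {p r : ℕ} [NeZero p]

/-- The set of solutions of `z ^ r = 1` in `ZMod p`. -/
def Lset (p r : ℕ) [NeZero p] : Finset (ZMod p) :=
  Finset.univ.filter (fun z => z ^ r = 1)

lemma mem_Lset {z : ZMod p} : z ∈ Lset p r ↔ z ^ r = 1 := by
  simp [Lset]

lemma one_mem_Lset : (1 : ZMod p) ∈ Lset p r := by simp [mem_Lset]

lemma card_Lset_ne_zero (hp : p.Prime) (hr0 : r ≠ 0) :
    ((Lset p r).card : ZMod p) ≠ 0 := by
  haveI : Fact p.Prime := ⟨hp⟩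
  intro hcon
  have hdvd : p ∣ (Lset p r).card := (ZMod.natCast_eq_zero_iff _ p).mp hcon
  have hle : (Lset p r).card ≤ p := by
    simpa [ZMod.card] using Finset.card_le_univ (Lset p r)
  have hpos : 0 < (Lset p r).card := Finset.card_pos.mpr ⟨1, one_mem_Lset⟩
  have hcard : (Lset p r).card = p := le_antisymm hle (Nat.le_of_dvd hpos hdvd)
  have huniv : Lset p r = Finset.univ := Finset.eq_univ_of_card _ (by simp [hcard, ZMod.card])
  have h0 : (0 : ZMod p) ∈ Lset p r := huniv ▸ Finset.mem_univ 0
  rw [mem_Lset, zero_pow hr0] at h0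
  exact zero_ne_one h0

lemma sum_sub_eq (z : ZMod p) :
    ∑ x ∈ Finset.univ.filter (fun x : ZMod p => (z - x) ^ r = 1), x
      = (Lset p r).card • z - ∑ s ∈ Lset p r, s := by
  have himg : Finset.univ.filter (fun x : ZMod p => (z - x) ^ r = 1)
      = (Lset p r).image (fun s => z - s) := by
    ext x
    simp only [Finset.mem_filter, Finset.mem_univ, true_and, Finset.mem_image, mem_Lset]
    constructor
    · intro h; exact ⟨z - x, h, by ring⟩
    · rintro ⟨s, hs, rfl⟩; rwa [show z - (z - s) = s by ring]
  rw [himg, Finset.sum_image (fun a _ b _ h => by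
    have := congrArg (fun t => z - t) h
    simpa using this)]
  rw [Finset.sum_sub_distrib, Finset.sum_const]

lemma translate_eq (hp : p.Prime) (hr0 : r ≠ 0) {z y : ZMod p}
    (h : ∀ x : ZMod p, (z - x) ^ r = 1 ↔ (y - x) ^ r = 1) : z = y := by
  haveI : Fact p.Prime := ⟨hp⟩
  have hfil : Finset.univ.filter (fun x : ZMod p => (z - x) ^ r = 1)
      = Finset.univ.filter (fun x : ZMod p => (y - x) ^ r = 1) :=
    Finset.filter_congr (fun x _ => by rw [h x])
  have h1 := sum_sub_eq (r := r) z
  have h2 := sum_sub_eq (r := r) y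
  rw [hfil, h2] at h1
  have h3 : ((Lset p r).card : ZMod p) * (z - y) = 0 := by
    have h4 : (Lset p r).card • z - (Lset p r).card • y = 0 := by
      rw [sub_eq_zero]
      have h5 := sub_eq_zero.mpr h1
      rw [sub_sub_sub_cancel_right, sub_eq_zero] at h5
      exact h5.symm
    rw [← smul_sub, nsmul_eq_mul] at h4
    exact h4
  rcases mul_eq_zero.mp h3 with hc | hzy
  · exact absurd hc (card_Lset_ne_zero hp hr0)
  · exact sub_eq_zero.mp hzy

lemma exists_nontrivial_root (hp : p.Prime) (hr1 : 1 < r) (hr : r ∣ p - 1) :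
    ∃ s : ZMod p, s ^ r = 1 ∧ s ≠ 1 := by
  haveI : Fact p.Prime := ⟨hp⟩
  obtain ⟨g, hg⟩ := IsCyclic.exists_generator (α := (ZMod p)ˣ)
  have hcard : Fintype.card (ZMod p)ˣ = p - 1 := by
    rw [ZMod.card_units_eq_totient p, Nat.totient_prime hp]
  have hord : orderOf g = p - 1 := by
    rw [orderOf_eq_card_of_forall_mem_zpowers hg, Nat.card_eq_fintype_card, hcard]
  have hp1pos : 0 < p - 1 := by have := hp.two_le; omega
  have hp3 : 1 < p - 1 := lt_of_lt_of_le hr1 (Nat.le_of_dvd hp1pos hr)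
  set k := (p - 1) / r with hkdef
  have hk : k * r = p - 1 := Nat.div_mul_cancel hr
  have hgp : g ^ (p - 1) = 1 := by rw [← hord]; exact pow_orderOf_eq_one g
  have hsr : (g ^ k) ^ r = 1 := by rw [← pow_mul, hk, hgp]
  have hsne : g ^ k ≠ 1 := by
    intro hcon
    have hdvd : p - 1 ∣ k := hord ▸ orderOf_dvd_of_pow_eq_one hcon
    rcases Nat.eq_zero_or_pos k with hk0 | hkpos
    · rw [hk0, zero_mul] at hk; omega
    · have := Nat.le_of_dvd hkpos hdvd
      have hlt : k < p - 1 := by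
        rw [hkdef]; exact Nat.div_lt_self hp1pos hr1
      omega
  refine ⟨((g ^ k : (ZMod p)ˣ) : ZMod p), ?_, ?_⟩
  · rw [← Units.val_pow_eq_pow_val, hsr, Units.val_one]
  · intro hcon
    exact hsne (Units.ext hcon)

end Lfacts

section Lfacts2

variable {p r : ℕ} [NeZero p]

lemma sum_Lset_eq_zero (hp : p.Prime) (hr1 : 1 < r) (hr : r ∣ p - 1) :
    ∑ z ∈ Lset p r, z = 0 := by
  haveI : Fact p.Prime := ⟨hp⟩
  obtain ⟨s, hsr, hs1⟩ := exists_nontrivial_root hp hr1 hr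
  have hs0 : s ≠ 0 := by
    intro hcon
    rw [hcon, zero_pow (by omega : r ≠ 0)] at hsr
    exact zero_ne_one hsr
  have himg : Lset p r = (Lset p r).image (fun z => s * z) := by
    ext x
    simp only [Finset.mem_image, mem_Lset]
    constructor
    · intro hx
      refine ⟨s⁻¹ * x, ?_, by field_simp⟩
      rw [mul_pow, hx, mul_one, inv_pow, hsr, inv_one]
    · rintro ⟨z, hz, rfl⟩
      rw [mul_pow, hz, hsr, mul_one]
  have hsum : ∑ z ∈ Lset p r, z = s * ∑ z ∈ Lset p r, z := by
    conv_lhs => rw [himg]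
    rw [Finset.sum_image (fun a _ b _ h => by
      exact mul_left_cancel₀ hs0 h), Finset.mul_sum]
  have : (s - 1) * ∑ z ∈ Lset p r, z = 0 := by
    rw [sub_mul, one_mul, ← hsum, sub_self]
  rcases mul_eq_zero.mp this with h | h
  · exact absurd (sub_eq_zero.mp h) hs1
  · exact h

lemma key_even (hp : p.Prime) (hodd : Odd p) (hr1 : 1 < r) (hr : r ∣ p - 1)
    (e : ZMod p) (h : ∀ d : ZMod p, (e - d) ^ r = 1 ↔ d ^ r = 1) : Even r := by
  haveI : Fact p.Prime := ⟨hp⟩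
  have hr0 : r ≠ 0 := by omega
  -- first, e = 0
  have he0 : e = 0 := by
    have hfil : Finset.univ.filter (fun x : ZMod p => (e - x) ^ r = 1) = Lset p r := by
      ext x
      simp only [Finset.mem_filter, Finset.mem_univ, true_and, mem_Lset, h x]
    have h1 := sum_sub_eq (r := r) e
    rw [hfil, sum_Lset_eq_zero hp hr1 hr] at h1
    have h2 : ((Lset p r).card : ZMod p) * e = 0 := by
      rw [← nsmul_eq_mul]
      rw [sub_zero] at h1
      exact h1.symm
    rcases mul_eq_zero.mp h2 with hc | he
    · exact absurd hc (card_Lset_ne_zero hp hr0)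
    · exact he
  have hneg : ((-1 : ZMod p)) ^ r = 1 := by
    have := (h (-1)).mp (by rw [he0, zero_sub, neg_neg, one_pow])
    exact this
  rcases Nat.even_or_odd r with hre | hro
  · exact hre
  · exfalso
    rw [hro.neg_one_pow] at hneg
    have h2 : (2 : ZMod p) = 0 := by
      have := congrArg (fun t => t + 1) hneg
      simpa [one_add_one_eq_two] using this.symm
    have hdvd : p ∣ 2 := by
      have : ((2 : ℕ) : ZMod p) = 0 := by exact_mod_cast h2
      exact (ZMod.natCast_eq_zero_iff 2 p).mp this
    have hp2 : p = 2 := (Nat.prime_dvd_prime_iff_eq hp Nat.prime_two).mp hdvd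
    rcases hodd with ⟨m, hm⟩; omega

end Lfacts2

section Fixing

variable {p r : ℕ}

/-- An automorphism of `graphG p r` fixing the left part pointwise is the identity. -/
lemma eq_one_of_fix_inl (hp : p.Prime) (hr1 : 1 < r)
    {η : Equiv.Perm (ZMod p ⊕ ZMod p)} (hη : IsAut (graphG p r) η)
    (hfix : ∀ x : ZMod p, η (Sum.inl x) = Sum.inl x) : η = 1 := by
  haveI : Fact p.Prime := ⟨hp⟩
  have hr0 : r ≠ 0 := by omega
  ext (x | y)
  · rw [hfix x]; rfl
  · show η (Sum.inr y) = Sum.inr y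
    have hadj : ∀ x : ZMod p, (graphG p r).Adj (Sum.inl x) (η (Sum.inr y)) ↔
        (y - x) ^ r = 1 := by
      intro x
      have := hη (Sum.inl x) (Sum.inr y)
      rw [hfix x] at this
      rw [this, adj_inl_inr]
    cases hu : η (Sum.inr y) with
    | inl z =>
      exfalso
      have h1 := (hadj (y - 1)).mpr (by rw [show y - (y - 1) = 1 by ring, one_pow])
      rw [hu] at h1
      exact not_adj_inl_inl _ _ h1
    | inr z =>
      rw [hu] at hadj
      simp only [adj_inl_inr] at hadj
      rw [translate_eq hp hr0 (z := z) (y := y) hadj]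

/-- A `p`-power-order automorphism preserving the left part and fixing `inl 0`
is the identity. -/
lemma eq_one_of_ppow (hp : p.Prime) (hr1 : 1 < r)
    {η : Equiv.Perm (ZMod p ⊕ ZMod p)} (hη : IsAut (graphG p r) η)
    (hfix0 : η (Sum.inl 0) = Sum.inl 0)
    (hA : ∀ x : ZMod p, ∃ z : ZMod p, η (Sum.inl x) = Sum.inl z)
    (hord : ∃ k : ℕ, η ^ (p ^ k) = 1) : η = 1 := by
  haveI : Fact p.Prime := ⟨hp⟩
  haveI : NeZero p := ⟨hp.ne_zero⟩
  obtain ⟨k, hk⟩ := hord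
  apply eq_one_of_fix_inl hp hr1 hη
  intro x
  -- iterates of η preserve the left part and fix inl 0
  have hiter_fix : ∀ n : ℕ, (⇑η)^[n] (Sum.inl (0 : ZMod p)) = Sum.inl 0 := by
    intro n
    induction n with
    | zero => rfl
    | succ n ih => rw [Function.iterate_succ_apply', ih, hfix0]
  have hiterA : ∀ n : ℕ, ∀ x : ZMod p, ∃ z : ZMod p,
      (⇑η)^[n] (Sum.inl x) = Sum.inl z := by
    intro n
    induction n with
    | zero => exact fun x => ⟨x, rfl⟩
    | succ n ih =>
      intro x
      obtain ⟨z, hz⟩ := ih x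
      obtain ⟨w, hw⟩ := hA z
      exact ⟨w, by rw [Function.iterate_succ_apply', hz, hw]⟩
  have hper : Function.IsPeriodicPt (⇑η) (p ^ k) (Sum.inl x) := by
    show (⇑η)^[p ^ k] (Sum.inl x) = Sum.inl x
    rw [Equiv.Perm.iterate_eq_pow, hk]
    rfl
  set d := Function.minimalPeriod (⇑η) (Sum.inl x) with hddef
  have hdpos : 0 < d := hper.minimalPeriod_pos (pow_pos hp.pos k)
  have hdvd : d ∣ p ^ k := hper.minimalPeriod_dvd
  obtain ⟨i, hile, hdi⟩ := (Nat.dvd_prime_pow hp).mp hdvd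
  rcases Nat.eq_zero_or_pos i with hi0 | hipos
  · -- d = 1 : fixed point
    rw [hi0, pow_zero] at hdi
    have := Function.minimalPeriod_eq_one_iff_isFixedPt.mp (hddef ▸ hdi)
    exact this
  · -- d ≥ p : too many distinct points in the left part minus the origin
    exfalso
    have hpd : p ≤ d := by
      rw [hdi]
      calc p = p ^ 1 := (pow_one p).symm
      _ ≤ p ^ i := Nat.pow_le_pow_right hp.pos hipos
    -- build an injection from Fin d into nonzero elements of ZMod p
    have hxne : ∀ j : ℕ, j < d → ∃ z : ZMod p, z ≠ 0 ∧
        (⇑η)^[j] (Sum.inl x) = Sum.inl z := by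
      intro j hj
      obtain ⟨z, hz⟩ := hiterA j x
      refine ⟨z, ?_, hz⟩
      intro hz0
      rw [hz0] at hz
      have hinj : Function.Injective ((⇑η)^[j]) :=
        Function.Injective.iterate η.injective j
      have := hinj (hz.trans (hiter_fix j).symm)
      -- inl x = inl 0, so x = 0, but then inl x is a fixed point and d = 1
      have hx0 : x = (0 : ZMod p) := by simpa using this
      have hd1 : d = 1 := by
        rw [hddef, hx0]
        exact Function.minimalPeriod_eq_one_iff_isFixedPt.mpr hfix0
      have hgt : 1 < p ^ i := Nat.one_lt_pow (by omega) hp.one_lt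
      omega
    choose zf hzf0 hzf using hxne
    have hinjf : ∀ (j j' : ℕ) (hj : j < d) (hj' : j' < d),
        zf j hj = zf j' hj' → j = j' := by
      intro j j' hj hj' heq
      have h1 : (⇑η)^[j] (Sum.inl x) = (⇑η)^[j'] (Sum.inl x) := by
        rw [hzf j hj, hzf j' hj', heq]
      exact Function.iterate_injOn_Iio_minimalPeriod hj hj' h1
    -- now count
    have hcard : d ≤ Fintype.card {z : ZMod p // z ≠ 0} := by
      have : Function.Injective
          (fun j : Fin d => (⟨zf j.1 j.2, hzf0 j.1 j.2⟩ : {z : ZMod p // z ≠ 0})) := by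
        intro a b hab
        exact Fin.ext (hinjf a.1 b.1 a.2 b.2 (congrArg Subtype.val hab))
      simpa using Fintype.card_le_of_injective _ this
    have hcard2 : Fintype.card {z : ZMod p // z ≠ 0} = p - 1 := by
      rw [Fintype.card_subtype_compl, Fintype.card_subtype_eq, ZMod.card]
    rw [hcard2] at hcard
    have h2p := hp.two_le
    omega

end Fixing

section Orbits

variable {p r : ℕ}

open MulAction in
/-- A `p`-subgroup of the automorphism group containing the rotation is the group
generated by the rotation. -/
lemma pgroup_eq_zpowers (hp : p.Prime) (hodd : Odd p) (hr1 : 1 < r)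
    (Q : Subgroup (Equiv.Perm (ZMod p ⊕ ZMod p)))
    (hQaut : ∀ σ ∈ Q, IsAut (graphG p r) σ)
    (hQp : IsPGroup p Q) (hρ : rotP p ∈ Q) :
    Q = Subgroup.zpowers (rotP p) := by
  haveI : Fact p.Prime := ⟨hp⟩
  haveI : NeZero p := ⟨hp.ne_zero⟩
  have hp3 : 3 ≤ p := by
    rcases hodd with ⟨m, hm⟩
    have := hp.two_le
    omega
  set b : ZMod p ⊕ ZMod p := Sum.inl 0 with hbdef
  set O : Set (ZMod p ⊕ ZMod p) := orbit Q b with hOdef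
  -- the left part is contained in the orbit of `inl 0`
  have hAO : Set.range (Sum.inl : ZMod p → ZMod p ⊕ ZMod p) ⊆ O := by
    rintro v ⟨x, rfl⟩
    refine ⟨⟨(rotP p) ^ x.val, pow_mem hρ _⟩, ?_⟩
    show ((rotP p) ^ x.val) (Sum.inl 0) = Sum.inl x
    rw [(rotP_pow x.val 0).1, zero_add, ZMod.natCast_rightInverse x]
  -- cardinalities
  have hcardA : Nat.card (Set.range (Sum.inl : ZMod p → ZMod p ⊕ ZMod p)) = p := by
    rw [← Nat.card_congr (Equiv.ofInjective Sum.inl Sum.inl_injective), Nat.card_zmod]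
  have hOfin : O.Finite := Set.toFinite O
  have hcardA' : (Set.range (Sum.inl : ZMod p → ZMod p ⊕ ZMod p)).ncard = p := by
    rw [← Nat.card_coe_set_eq]; exact hcardA
  have hcardOge : p ≤ Nat.card O := by
    rw [Nat.card_coe_set_eq]
    calc p = (Set.range (Sum.inl : ZMod p → ZMod p ⊕ ZMod p)).ncard := hcardA'.symm
    _ ≤ O.ncard := Set.ncard_le_ncard hAO hOfin
  have hcardOle : Nat.card O ≤ 2 * p := by
    rw [← card_vtx hp]
    exact Nat.card_le_card_of_injective _ Subtype.val_injective
  have hdvd : Nat.card O ∣ Nat.card Q := by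
    have h1 := Nat.card_congr (orbitProdStabilizerEquivGroup Q b)
    rw [Nat.card_prod] at h1
    exact ⟨Nat.card (stabilizer Q b), h1.symm⟩
  obtain ⟨n, hn⟩ := (IsPGroup.iff_card).mp hQp
  obtain ⟨j, hjle, hj⟩ := (Nat.dvd_prime_pow hp).mp (hn ▸ hdvd)
  have hcardO : Nat.card O = p := by
    have hple : p ≤ p ^ j := hj ▸ hcardOge
    have hupper : p ^ j ≤ 2 * p := hj ▸ hcardOle
    have hjpos : j ≠ 0 := by
      intro h0; rw [h0, pow_zero] at hple; omega
    have hj1 : j = 1 := by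
      by_contra hne
      have hj2 : 2 ≤ j := by omega
      have h2 : p * p ≤ p ^ j := by rw [← sq]; exact Nat.pow_le_pow_right hp.pos hj2
      nlinarith
    rw [hj, hj1, pow_one]
  -- hence the orbit is exactly the left part
  have hOA : O = Set.range (Sum.inl : ZMod p → ZMod p ⊕ ZMod p) := by
    symm
    apply Set.eq_of_subset_of_ncard_le hAO
    rw [← Nat.card_coe_set_eq, ← Nat.card_coe_set_eq, hcardO, hcardA]
  -- the stabilizer of `inl 0` is trivial
  have hstab : stabilizer Q b = ⊥ := by
    rw [Subgroup.eq_bot_iff_forall]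
    intro q hq
    have hη : IsAut (graphG p r) (q : Equiv.Perm (ZMod p ⊕ ZMod p)) := hQaut _ q.2
    have hfix0 : (q : Equiv.Perm (ZMod p ⊕ ZMod p)) (Sum.inl 0) = Sum.inl 0 := hq
    have hAq : ∀ x : ZMod p, ∃ z : ZMod p,
        (q : Equiv.Perm (ZMod p ⊕ ZMod p)) (Sum.inl x) = Sum.inl z := by
      intro x
      have hmem : (Sum.inl x : ZMod p ⊕ ZMod p) ∈ O := hAO ⟨x, rfl⟩
      obtain ⟨h, hh⟩ := hmem
      have : q • (Sum.inl x : ZMod p ⊕ ZMod p) ∈ O := by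
        rw [← hh, smul_smul]
        exact ⟨q * h, rfl⟩
      rw [hOA] at this
      obtain ⟨z, hz⟩ := this
      exact ⟨z, hz.symm⟩
    have hord : ∃ k : ℕ, (q : Equiv.Perm (ZMod p ⊕ ZMod p)) ^ (p ^ k) = 1 := by
      obtain ⟨k, hk⟩ := hQp q
      exact ⟨k, by rw [← SubmonoidClass.coe_pow, hk, OneMemClass.coe_one]⟩
    have := eq_one_of_ppow hp hr1 hη hfix0 hAq hord
    exact Subtype.ext this
  -- count
  have hcardQ : Nat.card Q = p := by
    have h1 := Nat.card_congr (orbitProdStabilizerEquivGroup Q b)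
    rw [Nat.card_prod, hstab, hcardO] at h1
    simpa using h1.symm
  symm
  apply Subgroup.eq_of_le_of_card_ge
  · rw [Subgroup.zpowers_le]; exact hρ
  · rw [hcardQ, Nat.card_zpowers, rotP_orderOf hp]

end Orbits

section Hard

variable {p r : ℕ}

lemma conj_pow_grp {M : Type*} [Group M] (a b : M) (n : ℕ) :
    (a * b * a⁻¹) ^ n = a * b ^ n * a⁻¹ := by
  induction n with
  | zero => simp
  | succ n ih => rw [pow_succ, pow_succ, ih]; group

lemma even_of_circ (hp : p.Prime) (hodd : Odd p) (hr1 : 1 < r) (hr : r ∣ p - 1)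
    (h : IsCirculant (graphG p r)) : Even r := by
  haveI : Fact p.Prime := ⟨hp⟩
  haveI : NeZero p := ⟨hp.ne_zero⟩
  obtain ⟨σ, hAut, hOrd, hTrans⟩ := h
  rw [card_vtx hp] at hOrd
  set G := autGroup (graphG p r) with hGdef
  have hσG : σ ∈ G := hAut
  have hρG : rotP p ∈ G := rotP_aut
  set σ' : ↥G := ⟨σ, hσG⟩ with hσ'def
  set ρ' : ↥G := ⟨rotP p, hρG⟩ with hρ'def
  have hordσ' : orderOf σ' = 2 * p := by
    rw [← orderOf_injective G.subtype Subtype.coe_injective σ']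
    exact hOrd
  have hordρ' : orderOf ρ' = p := by
    rw [← orderOf_injective G.subtype Subtype.coe_injective ρ']
    exact rotP_orderOf hp
  have hgcd : Nat.gcd (2 * p) 2 = 2 := by
    rw [Nat.gcd_comm]; exact Nat.gcd_eq_left ⟨p, rfl⟩
  have hordsq : orderOf (σ' ^ 2) = p := by
    rw [orderOf_pow, hordσ', hgcd, Nat.mul_div_cancel_left p (by norm_num : 0 < 2)]
  -- Sylow setup
  have hP0 : IsPGroup p (Subgroup.zpowers ρ') :=
    IsPGroup.of_card (by rw [Nat.card_zpowers, hordρ', pow_one])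
  have hP1 : IsPGroup p (Subgroup.zpowers (σ' ^ 2)) :=
    IsPGroup.of_card (by rw [Nat.card_zpowers, hordsq, pow_one])
  obtain ⟨Q0, hQ0⟩ := hP0.exists_le_sylow
  obtain ⟨Q1, hQ1⟩ := hP1.exists_le_sylow
  haveI : Finite (Sylow p ↥G) :=
    Finite.of_injective (fun P : Sylow p ↥G => (P : Set ↥G)) SetLike.coe_injective
  obtain ⟨γ, hγ⟩ := MulAction.exists_smul_eq (↥G) Q1 Q0
  have hconj : γ * σ' ^ 2 * γ⁻¹ ∈ (Q0 : Subgroup ↥G) := by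
    have h1 := Subgroup.smul_mem_pointwise_smul (σ' ^ 2) (MulAut.conj γ) Q1.toSubgroup
      (hQ1 (Subgroup.mem_zpowers _))
    rw [← Sylow.coe_subgroup_smul, hγ] at h1
    simpa [MulAut.smul_def] using h1
  -- Q0 is the group generated by the rotation
  have hQ0eq : Subgroup.map G.subtype Q0.toSubgroup = Subgroup.zpowers (rotP p) := by
    apply pgroup_eq_zpowers hp hodd hr1
    · rintro s ⟨y, hy, rfl⟩
      exact y.2
    · exact Q0.2.map G.subtype
    · exact ⟨ρ', hQ0 (Subgroup.mem_zpowers _), rfl⟩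
  -- the conjugated generator
  set δ : ↥G := γ * σ' * γ⁻¹ with hδdef
  set τ : Equiv.Perm (ZMod p ⊕ ZMod p) := (δ : Equiv.Perm (ZMod p ⊕ ZMod p)) with hτdef
  have hτaut : IsAut (graphG p r) τ := δ.2
  have hδ2 : δ ^ 2 = γ * σ' ^ 2 * γ⁻¹ := by rw [hδdef, conj_pow_grp]
  have hτ2 : τ ^ 2 ∈ Subgroup.zpowers (rotP p) := by
    rw [← hQ0eq]
    refine ⟨δ ^ 2, ?_, rfl⟩
    rw [hδ2]; exact hconj
  have hordδ : orderOf δ = 2 * p := by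
    rw [hδdef, show γ * σ' * γ⁻¹ = (MulAut.conj γ) σ' from rfl,
      MulEquiv.orderOf_eq (MulAut.conj γ) σ']
    exact hordσ'
  have hordτ : orderOf τ = 2 * p := by
    rw [show τ = G.subtype δ from rfl, orderOf_injective G.subtype Subtype.coe_injective δ]
    exact hordδ
  have hτtrans : ∀ v w : ZMod p ⊕ ZMod p, ∃ k : ℕ, (τ ^ k) v = w := by
    intro v w
    set g : Equiv.Perm (ZMod p ⊕ ZMod p) := ((γ : ↥G) : Equiv.Perm (ZMod p ⊕ ZMod p))
    have hτg : τ = g * σ * g⁻¹ := rfl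
    obtain ⟨k, hk⟩ := hTrans (g⁻¹ v) (g⁻¹ w)
    refine ⟨k, ?_⟩
    rw [hτg, conj_pow_grp]
    show g ((σ ^ k) (g⁻¹ v)) = w
    rw [hk]
    exact Equiv.apply_symm_apply g w
  clear hδ2 hconj hQ0eq hordδ hQ0 hQ1 hγ hordsq hP0 hP1 hordσ' hOrd hTrans hAut
  -- τ commutes with the rotation
  have hordτ2 : orderOf (τ ^ 2) = p := by
    rw [orderOf_pow, hordτ, hgcd, Nat.mul_div_cancel_left p (by norm_num : 0 < 2)]
  have hKeq : Subgroup.zpowers (τ ^ 2) = Subgroup.zpowers (rotP p) := by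
    apply Subgroup.eq_of_le_of_card_ge (Subgroup.zpowers_le.mpr hτ2)
    rw [Nat.card_zpowers, Nat.card_zpowers, hordτ2, rotP_orderOf hp]
  have hρτ : rotP p ∈ Subgroup.zpowers (τ ^ 2) := hKeq ▸ Subgroup.mem_zpowers _
  obtain ⟨n, hn⟩ := hρτ
  have hcommute : Commute τ (rotP p) := by
    rw [← hn]
    exact ((Commute.refl τ).pow_right 2).zpow_right n
  have hc : ∀ (m : ℕ) (v : ZMod p ⊕ ZMod p),
      τ ((rotP p ^ m) v) = (rotP p ^ m) (τ v) := by
    intro m v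
    have := (hcommute.pow_right m).eq
    calc τ ((rotP p ^ m) v) = (τ * rotP p ^ m) v := rfl
    _ = (rotP p ^ m * τ) v := by rw [this]
    _ = (rotP p ^ m) (τ v) := rfl
  have hτinl : ∀ x : ZMod p, τ (Sum.inl x) = (rotP p ^ x.val) (τ (Sum.inl 0)) := by
    intro x
    have hx : (Sum.inl x : ZMod p ⊕ ZMod p) = (rotP p ^ x.val) (Sum.inl 0) := by
      rw [(rotP_pow x.val 0).1, zero_add, ZMod.natCast_rightInverse x]
    rw [hx, hc]
  have hτinr : ∀ x : ZMod p, τ (Sum.inr x) = (rotP p ^ x.val) (τ (Sum.inr 0)) := by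
    intro x
    have hx : (Sum.inr x : ZMod p ⊕ ZMod p) = (rotP p ^ x.val) (Sum.inr 0) := by
      rw [(rotP_pow x.val 0).2, zero_add, ZMod.natCast_rightInverse x]
    rw [hx, hc]
  -- case analysis on the image of inl 0
  cases h0 : τ (Sum.inl 0) with
  | inl c =>
    exfalso
    have hstep : ∀ x : ZMod p, τ (Sum.inl x) = Sum.inl (c + x) := by
      intro x
      rw [hτinl x, h0, (rotP_pow x.val c).1, ZMod.natCast_rightInverse x]
    have hkA : ∀ k : ℕ, ∃ z : ZMod p, (τ ^ k) (Sum.inl 0) = Sum.inl z := by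
      intro k
      induction k with
      | zero => exact ⟨0, rfl⟩
      | succ k ih =>
        obtain ⟨z, hz⟩ := ih
        refine ⟨c + z, ?_⟩
        rw [pow_succ']
        show τ ((τ ^ k) (Sum.inl 0)) = Sum.inl (c + z)
        rw [hz, hstep]
    obtain ⟨k, hk⟩ := hτtrans (Sum.inl 0) (Sum.inr 0)
    obtain ⟨z, hz⟩ := hkA k
    rw [hz] at hk
    exact absurd hk (by simp)
  | inr c =>
    have hstepA : ∀ x : ZMod p, τ (Sum.inl x) = Sum.inr (c + x) := by
      intro x
      rw [hτinl x, h0, (rotP_pow x.val c).2, ZMod.natCast_rightInverse x]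
    cases h1 : τ (Sum.inr 0) with
    | inr d =>
      exfalso
      have hstepB : ∀ x : ZMod p, τ (Sum.inr x) = Sum.inr (d + x) := by
        intro x
        rw [hτinr x, h1, (rotP_pow x.val d).2, ZMod.natCast_rightInverse x]
      have h2 : τ (Sum.inr (c - d)) = Sum.inr c := by
        rw [hstepB, show d + (c - d) = c by ring]
      have h3 : τ (Sum.inl 0) = τ (Sum.inr (c - d)) := by
        rw [h2, hstepA, add_zero]
      exact absurd (τ.injective h3) (by simp)
    | inl d =>
      have hstepB : ∀ x : ZMod p, τ (Sum.inr x) = Sum.inl (d + x) := by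
        intro x
        rw [hτinr x, h1, (rotP_pow x.val d).1, ZMod.natCast_rightInverse x]
      apply key_even hp hodd hr1 hr (c - d)
      intro dd
      have := hτaut (Sum.inl 0) (Sum.inr dd)
      rw [hstepA 0, hstepB dd, add_zero, adj_inr_inl, adj_inl_inr, sub_zero,
        show c - (d + dd) = (c - d) - dd by ring] at this
      exact this

end Hard

/-- **Lemma 2.3.** For an odd prime `p` and a divisor `r > 1` of `p - 1`, the graph
`G(2p,r)` is a Cayley graph of the dihedral group of order `2p` (its automorphism group
contains a regular dihedral subgroup of order `2p`), hence a bicirculant; and it is a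
circulant iff `r` is even. -/
theorem stmt2 (p r : ℕ) (hp : p.Prime) (hodd : Odd p) (hr1 : 1 < r) (hr : r ∣ p - 1) :
    (∃ D : Subgroup (Equiv.Perm (ZMod p ⊕ ZMod p)), D ≤ autGroup (graphG p r) ∧
      RegularOn D ∧ Nonempty (↥D ≃* DihedralGroup p)) ∧
    IsBicirculant (graphG p r) ∧
    (IsCirculant (graphG p r) ↔ Even r) := by
  have hp1 : 1 < p := hp.one_lt
  refine ⟨⟨(dihHom p).range, ?_, dih_regular hp1, ⟨(MonoidHom.ofInjective (dihHom_injective hp1)).symm⟩⟩, bicirc hp, ?_, ?_⟩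
  · rintro s ⟨a, rfl⟩
    exact dihHom_mem_aut (by omega) a
  · exact fun h => even_of_circ hp hodd hr1 hr h
  · exact fun h => circ_of_even hp hodd h
end ATB
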